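/- (Proposition 3, connection part.) If the dressing field transforms under a residual gauge transformation γ' as u ↦ γ'⁻¹uC, where C : U → GL(n, ℝ) is a smooth (twisting) map, then the dressed potential transforms as a twisted gauge potential: for any gauge potential A on U and smooth maps γ', u, C : U → GL(n, ℝ), one has (A^{γ'})^{γ'⁻¹uC} = (A^u)^{C}, i.e. the dressed potential gauge transforms by C rather than by γ'. -/

import Mathlib

noncomputable section

open Matrix

attribute [local instance]
  Matrix.linftyOpNormedAddCommGroup Matrix.linftyOpNormedRing Matrix.linftyOpNormedAlgebra

/-- The gauge transform `A^γ` (also used for the dressing operation `A^u`) of a gauge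
potential `A` by a `GL(n,ℝ)`-valued map `γ`:
`A^γ(x)(v) = γ(x)⁻¹ ⬝ A(x)(v) ⬝ γ(x) + γ(x)⁻¹ ⬝ (fderiv γ x v)`. -/
def gaugeTransform {m n : ℕ}
    (A : (Fin m → ℝ) → ((Fin m → ℝ) →L[ℝ] Matrix (Fin n) (Fin n) ℝ))
    (γ : (Fin m → ℝ) → (Matrix (Fin n) (Fin n) ℝ)ˣ) :
    (Fin m → ℝ) → ((Fin m → ℝ) →L[ℝ] Matrix (Fin n) (Fin n) ℝ) := fun x =>
  ((ContinuousLinearMap.mul ℝ (Matrix (Fin n) (Fin n) ℝ) (((γ x)⁻¹ : (Matrix (Fin n) (Fin n) ℝ)ˣ) : Matrix (Fin n) (Fin n) ℝ)).comp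
      (((ContinuousLinearMap.mul ℝ (Matrix (Fin n) (Fin n) ℝ)).flip ((γ x : Matrix (Fin n) (Fin n) ℝ))).comp (A x))) +
  (ContinuousLinearMap.mul ℝ (Matrix (Fin n) (Fin n) ℝ) (((γ x)⁻¹ : (Matrix (Fin n) (Fin n) ℝ)ˣ) : Matrix (Fin n) (Fin n) ℝ)).comp
      (fderiv ℝ (fun y => (γ y : Matrix (Fin n) (Fin n) ℝ)) x)

lemma gaugeTransform_comp {m n : ℕ}
    (A : (Fin m → ℝ) → ((Fin m → ℝ) →L[ℝ] Matrix (Fin n) (Fin n) ℝ))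
    (a b : (Fin m → ℝ) → (Matrix (Fin n) (Fin n) ℝ)ˣ) (x : Fin m → ℝ)
    (ha : DifferentiableAt ℝ (fun y => (a y : Matrix (Fin n) (Fin n) ℝ)) x)
    (hb : DifferentiableAt ℝ (fun y => (b y : Matrix (Fin n) (Fin n) ℝ)) x) :
    gaugeTransform (gaugeTransform A a) b x = gaugeTransform A (fun y => a y * b y) x := by
  ext v : 1
  have hder : fderiv ℝ (fun y => ((a y : Matrix (Fin n) (Fin n) ℝ) * (b y : Matrix (Fin n) (Fin n) ℝ))) x v
      = fderiv ℝ (fun y => (a y : Matrix (Fin n) (Fin n) ℝ)) x v * (b x : Matrix (Fin n) (Fin n) ℝ)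
        + (a x : Matrix (Fin n) (Fin n) ℝ) * fderiv ℝ (fun y => (b y : Matrix (Fin n) (Fin n) ℝ)) x v := by
    refine (congrArg (fun L => L v) (fderiv_fun_mul' ha hb)).trans ?_; simp [add_comm]; rfl
  simp only [gaugeTransform, ContinuousLinearMap.add_apply, ContinuousLinearMap.comp_apply,
    ContinuousLinearMap.mul_apply', ContinuousLinearMap.flip_apply, Units.val_mul, _root_.mul_inv_rev]
  change (((b x)⁻¹ : (Matrix (Fin n) (Fin n) ℝ)ˣ) : Matrix (Fin n) (Fin n) ℝ) * (((((a x)⁻¹ : (Matrix (Fin n) (Fin n) ℝ)ˣ) : Matrix (Fin n) (Fin n) ℝ) * (A x v * ((a x : (Matrix (Fin n) (Fin n) ℝ)ˣ) : Matrix (Fin n) (Fin n) ℝ))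
      + (((a x)⁻¹ : (Matrix (Fin n) (Fin n) ℝ)ˣ) : Matrix (Fin n) (Fin n) ℝ) * fderiv ℝ (fun y => (a y : Matrix (Fin n) (Fin n) ℝ)) x v) * ((b x : (Matrix (Fin n) (Fin n) ℝ)ˣ) : Matrix (Fin n) (Fin n) ℝ))
      + (((b x)⁻¹ : (Matrix (Fin n) (Fin n) ℝ)ˣ) : Matrix (Fin n) (Fin n) ℝ) * fderiv ℝ (fun y => (b y : Matrix (Fin n) (Fin n) ℝ)) x v
    = ((((b x)⁻¹ : (Matrix (Fin n) (Fin n) ℝ)ˣ) : Matrix (Fin n) (Fin n) ℝ) * (((a x)⁻¹ : (Matrix (Fin n) (Fin n) ℝ)ˣ) : Matrix (Fin n) (Fin n) ℝ)) * (A x v * (((a x : (Matrix (Fin n) (Fin n) ℝ)ˣ) : Matrix (Fin n) (Fin n) ℝ) * ((b x : (Matrix (Fin n) (Fin n) ℝ)ˣ) : Matrix (Fin n) (Fin n) ℝ)))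
      + ((((b x)⁻¹ : (Matrix (Fin n) (Fin n) ℝ)ˣ) : Matrix (Fin n) (Fin n) ℝ) * (((a x)⁻¹ : (Matrix (Fin n) (Fin n) ℝ)ˣ) : Matrix (Fin n) (Fin n) ℝ)) * fderiv ℝ (fun y => ((a y : Matrix (Fin n) (Fin n) ℝ) * (b y : Matrix (Fin n) (Fin n) ℝ))) x v
  rw [hder]
  simp only [mul_add, add_mul, mul_assoc, Units.inv_mul_cancel_left, ← add_assoc]

/-- Proposition 3, connection part: if the dressing field transforms under a residual
gauge transformation `γ'` as `u ↦ γ'⁻¹uC`, with `C` a smooth twisting map, then the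
dressed potential transforms as a twisted gauge potential:
`(A^{γ'})^{γ'⁻¹uC} = (A^u)^C`. -/
theorem residual_gauge_twisted {m n : ℕ}
    (U : Set (Fin m → ℝ)) (hU : IsOpen U)
    (A : (Fin m → ℝ) → ((Fin m → ℝ) →L[ℝ] Matrix (Fin n) (Fin n) ℝ))
    (γ' u C : (Fin m → ℝ) → (Matrix (Fin n) (Fin n) ℝ)ˣ)
    (hA : @ContDiffOn ℝ _ _ _ _ _ ContinuousLinearMap.toNormedAddCommGroup _ ⊤ A U)
    (hγ' : ContDiffOn ℝ ⊤ (fun x => (γ' x : Matrix (Fin n) (Fin n) ℝ)) U)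
    (hu : ContDiffOn ℝ ⊤ (fun x => (u x : Matrix (Fin n) (Fin n) ℝ)) U)
    (hC : ContDiffOn ℝ ⊤ (fun x => (C x : Matrix (Fin n) (Fin n) ℝ)) U) :
    ∀ x ∈ U, gaugeTransform (gaugeTransform A γ') (fun y => (γ' y)⁻¹ * u y * C y) x
      = gaugeTransform (gaugeTransform A u) C x := by
  intro x hx
  have hγd : DifferentiableAt ℝ (fun y => (γ' y : Matrix (Fin n) (Fin n) ℝ)) x :=
    (hγ'.contDiffAt (hU.mem_nhds hx)).differentiableAt (by simp)
  have hud : DifferentiableAt ℝ (fun y => (u y : Matrix (Fin n) (Fin n) ℝ)) x :=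
    (hu.contDiffAt (hU.mem_nhds hx)).differentiableAt (by simp)
  have hCd : DifferentiableAt ℝ (fun y => (C y : Matrix (Fin n) (Fin n) ℝ)) x :=
    (hC.contDiffAt (hU.mem_nhds hx)).differentiableAt (by simp)
  have hinv : DifferentiableAt ℝ
      (fun y => (((γ' y)⁻¹ : (Matrix (Fin n) (Fin n) ℝ)ˣ) : Matrix (Fin n) (Fin n) ℝ)) x := by
    have h1 : ContDiffAt ℝ ⊤ Ring.inverse ((γ' x : Matrix (Fin n) (Fin n) ℝ)) :=
      contDiffAt_ringInverse ℝ (γ' x)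
    have h2 : ContDiffAt ℝ ⊤ (fun y => Ring.inverse (γ' y : Matrix (Fin n) (Fin n) ℝ)) x :=
      ContDiffAt.comp (g := Ring.inverse) x h1 (hγ'.contDiffAt (hU.mem_nhds hx))
    have h3 := h2.differentiableAt (by simp)
    simp [Ring.inverse_unit] at h3 ⊢
    exact h3
  have hbd : DifferentiableAt ℝ
      (fun y => ((((γ' y)⁻¹ * u y * C y) : (Matrix (Fin n) (Fin n) ℝ)ˣ) : Matrix (Fin n) (Fin n) ℝ)) x := by
    have h3 := (hinv.fun_mul hud).fun_mul hCd
    simp only [Units.val_mul]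
    exact h3
  rw [gaugeTransform_comp A γ' _ x hγd hbd, gaugeTransform_comp A u C x hud hCd]
  have : (fun y => γ' y * ((γ' y)⁻¹ * u y * C y)) = fun y => u y * C y := by
    funext y; group
  rw [this]
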